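/- Let ρ₀, ρ₁ be density matrices on ℂ² and M₀, M₁ be positive semidefinite 2×2 matrices with M₀ + M₁ = I. If Tr(M₀ρ₀) = 1, Tr(M₁ρ₁) = 1, Tr(M₀ρ₁) = 0, and Tr(M₁ρ₀) = 0, then there exist orthogonal unit vectors ψ₀, ψ₁ ∈ ℂ² such that ρ₀ = M₀ = |ψ₀⟩⟨ψ₀| and ρ₁ = M₁ = |ψ₁⟩⟨ψ₁|. -/

import Mathlib

open Matrix ComplexOrder

open scoped MatrixOrder in
/-- For positive semidefinite matrices, a vanishing trace of the product forces the
product itself to vanish. -/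
lemma tz_aux_17 {n : Type*} [Fintype n] [DecidableEq n] {A B : Matrix n n ℂ}
    (hA : A.PosSemidef) (hB : B.PosSemidef) (h : (A * B).trace = 0) : A * B = 0 := by
  set sA := CFC.sqrt A with hsA
  set sB := CFC.sqrt B with hsB
  have hAher : sAᴴ = sA := (CFC.sqrt_nonneg A).posSemidef.1
  have hBher : sBᴴ = sB := (CFC.sqrt_nonneg B).posSemidef.1
  set C := sA * sB with hC
  have h1 : (Cᴴ * C).trace = 0 := by
    have e1 : Cᴴ * C = sB * (A * sB) := by
      rw [hC, conjTranspose_mul, hAher, hBher, mul_assoc, ← mul_assoc sA, CFC.sqrt_mul_sqrt_self A hA.nonneg,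
        ← mul_assoc]
    rw [e1, trace_mul_comm, mul_assoc, CFC.sqrt_mul_sqrt_self B hB.nonneg, h]
  have hsum : ∑ i : n, ∑ j : n, star (C j i) * C j i = 0 := by
    rw [← h1]
    simp [Matrix.trace, Matrix.diag, Matrix.mul_apply, Matrix.conjTranspose_apply]
  have hCzero : C = 0 := by
    ext j i
    have h2 := (Finset.sum_eq_zero_iff_of_nonneg (fun i _ =>
      Finset.sum_nonneg fun j _ => star_mul_self_nonneg (C j i))).mp hsum i (Finset.mem_univ i)
    have h3 := (Finset.sum_eq_zero_iff_of_nonneg (fun j _ =>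
      star_mul_self_nonneg (C j i))).mp h2 j (Finset.mem_univ j)
    simpa using CStarRing.star_mul_self_eq_zero_iff (C j i) |>.mp h3
  calc A * B = sA * C * sB := by
        rw [hC, ← mul_assoc, CFC.sqrt_mul_sqrt_self A hA.nonneg, mul_assoc, CFC.sqrt_mul_sqrt_self B hB.nonneg]
    _ = 0 := by rw [hCzero, mul_zero, zero_mul]

/-- A singular positive semidefinite 2×2 matrix is an outer product. -/
lemma pure_decomp_aux_17 {ρ : Matrix (Fin 2) (Fin 2) ℂ} (h : ρ.PosSemidef) (hdet : ρ.det = 0) :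
    ∃ ψ : Fin 2 → ℂ, ρ = Matrix.vecMulVec ψ (star ψ) := by
  have hherm := h.1
  have h10 : ρ 1 0 = star (ρ 0 1) := by
    have := congrFun (congrFun hherm.symm 1) 0
    simpa [Matrix.conjTranspose_apply] using this
  have hdet2 : ρ 0 0 * ρ 1 1 - ρ 0 1 * ρ 1 0 = 0 := by
    rw [← Matrix.det_fin_two]; exact hdet
  have hdiag : ∀ i, 0 ≤ ρ i i := fun i => by
    have := h.diag_nonneg (i := i)
    simpa [dotProduct, Matrix.mulVec, Fin.sum_univ_two, Pi.single_apply] using this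
  have h00 : ρ 0 0 = ((ρ 0 0).re : ℂ) := by
    have := (Complex.le_def.mp (hdiag 0)).2
    exact Complex.ext rfl (by simpa using this.symm)
  have h00re : 0 ≤ (ρ 0 0).re := by
    simpa using (Complex.le_def.mp (hdiag 0)).1
  have h11c : ρ 1 1 = ((ρ 1 1).re : ℂ) := by
    have := (Complex.le_def.mp (hdiag 1)).2
    exact Complex.ext rfl (by simpa using this.symm)
  have h11re : 0 ≤ (ρ 1 1).re := by
    simpa using (Complex.le_def.mp (hdiag 1)).1
  by_cases ha : ρ 0 0 = 0
  · have hb : ρ 0 1 = 0 := by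
      have hz : ρ 0 1 * star (ρ 0 1) = 0 := by
        rw [← h10]; linear_combination -hdet2 + ρ 1 1 * ha
      rcases mul_eq_zero.mp hz with h' | h'
      · exact h'
      · exact star_eq_zero.mp h'
    refine ⟨![0, (Real.sqrt (ρ 1 1).re : ℂ)], ?_⟩
    have hd : ((Real.sqrt (ρ 1 1).re : ℂ)) * ((Real.sqrt (ρ 1 1).re : ℂ)) = ρ 1 1 := by
      rw [h11c]; norm_cast; exact Real.mul_self_sqrt h11re
    ext i j
    fin_cases i <;> fin_cases j <;>
      simp [Matrix.vecMulVec_apply, ha, hb, h10, Complex.star_def, Complex.conj_ofReal, hd]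
  · set r : ℝ := Real.sqrt (ρ 0 0).re with hr
    have hrpos : 0 < r := Real.sqrt_pos.mpr
      (lt_of_le_of_ne h00re (fun hc => ha (by rw [h00, ← hc]; simp)))
    have hr2 : (r : ℂ) * r = ρ 0 0 := by
      rw [h00]; norm_cast; exact Real.mul_self_sqrt h00re
    have hrne : (r : ℂ) ≠ 0 := by exact_mod_cast hrpos.ne'
    refine ⟨![(r : ℂ), star (ρ 0 1) / r], ?_⟩
    have h10' : ρ 1 0 = (starRingEnd ℂ) (ρ 0 1) := h10
    ext i j
    fin_cases i <;> fin_cases j <;>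
      simp only [Fin.zero_eta, Fin.mk_one, Fin.isValue, Matrix.vecMulVec_apply,
        Matrix.cons_val_zero, Matrix.cons_val_one, Matrix.head_cons, Pi.star_apply,
        Complex.star_def, map_div₀, Complex.conj_conj, Complex.conj_ofReal]
    · linear_combination -hr2
    · field_simp
    · rw [h10']; field_simp
    · field_simp
      linear_combination ρ 1 1 * hr2 + hdet2 + ρ 0 1 * h10'

theorem stmt_17 (ρ₀ ρ₁ M₀ M₁ : Matrix (Fin 2) (Fin 2) ℂ)
    (hρ₀ : ρ₀.PosSemidef) (hρ₀tr : ρ₀.trace = 1)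
    (hρ₁ : ρ₁.PosSemidef) (hρ₁tr : ρ₁.trace = 1)
    (hM₀ : M₀.PosSemidef) (hM₁ : M₁.PosSemidef) (hMsum : M₀ + M₁ = 1)
    (h00 : (M₀ * ρ₀).trace = 1) (h11 : (M₁ * ρ₁).trace = 1)
    (h01 : (M₀ * ρ₁).trace = 0) (h10 : (M₁ * ρ₀).trace = 0) :
    ∃ ψ₀ ψ₁ : Fin 2 → ℂ,
      star ψ₀ ⬝ᵥ ψ₀ = 1 ∧ star ψ₁ ⬝ᵥ ψ₁ = 1 ∧ star ψ₀ ⬝ᵥ ψ₁ = 0 ∧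
      ρ₀ = Matrix.vecMulVec ψ₀ (star ψ₀) ∧ M₀ = Matrix.vecMulVec ψ₀ (star ψ₀) ∧
      ρ₁ = Matrix.vecMulVec ψ₁ (star ψ₁) ∧ M₁ = Matrix.vecMulVec ψ₁ (star ψ₁) := by
  have hz10 : M₁ * ρ₀ = 0 := tz_aux_17 hM₁ hρ₀ h10
  have hz01 : M₀ * ρ₁ = 0 := tz_aux_17 hM₀ hρ₁ h01
  have hM0ρ0 : M₀ * ρ₀ = ρ₀ := by
    have h' : (M₀ + M₁) * ρ₀ = ρ₀ := by rw [hMsum, one_mul]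
    rwa [add_mul, hz10, add_zero] at h'
  have hM1ρ1 : M₁ * ρ₁ = ρ₁ := by
    have h' : (M₀ + M₁) * ρ₁ = ρ₁ := by rw [hMsum, one_mul]
    rwa [add_mul, hz01, zero_add] at h'
  have hρ0M0 : ρ₀ * M₀ = ρ₀ := by
    have h' := congrArg Matrix.conjTranspose hM0ρ0
    rwa [Matrix.conjTranspose_mul, hρ₀.1, hM₀.1] at h'
  have hρ0ρ1 : ρ₀ * ρ₁ = 0 := by
    rw [← hρ0M0, mul_assoc, hz01, mul_zero]
  have hρ1ρ0 : ρ₁ * ρ₀ = 0 := by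
    have h' := congrArg Matrix.conjTranspose hρ0ρ1
    rwa [Matrix.conjTranspose_mul, hρ₀.1, hρ₁.1, Matrix.conjTranspose_zero] at h'
  have hdet0 : ρ₀.det = 0 := by
    by_contra hd
    have hinv := Matrix.nonsing_inv_mul ρ₀ (isUnit_iff_ne_zero.mpr hd)
    have hz : ρ₁ = 0 := by
      calc ρ₁ = (ρ₀⁻¹ * ρ₀) * ρ₁ := by rw [hinv, one_mul]
        _ = ρ₀⁻¹ * (ρ₀ * ρ₁) := by rw [mul_assoc]
        _ = 0 := by rw [hρ0ρ1, mul_zero]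
    rw [hz] at hρ₁tr; simp at hρ₁tr
  have hdet1 : ρ₁.det = 0 := by
    by_contra hd
    have hinv := Matrix.nonsing_inv_mul ρ₁ (isUnit_iff_ne_zero.mpr hd)
    have hz : ρ₀ = 0 := by
      calc ρ₀ = (ρ₁⁻¹ * ρ₁) * ρ₀ := by rw [hinv, one_mul]
        _ = ρ₁⁻¹ * (ρ₁ * ρ₀) := by rw [mul_assoc]
        _ = 0 := by rw [hρ1ρ0, mul_zero]
    rw [hz] at hρ₀tr; simp at hρ₀tr
  obtain ⟨ψ₀, hψ0⟩ := pure_decomp_aux_17 hρ₀ hdet0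
  obtain ⟨ψ₁, hψ1⟩ := pure_decomp_aux_17 hρ₁ hdet1
  have n0 : star ψ₀ ⬝ᵥ ψ₀ = 1 := by
    have h' := hρ₀tr; rw [hψ0] at h'
    simpa [Matrix.trace, Matrix.diag, Matrix.vecMulVec_apply, dotProduct,
      Fin.sum_univ_two, mul_comm] using h'
  have n1 : star ψ₁ ⬝ᵥ ψ₁ = 1 := by
    have h' := hρ₁tr; rw [hψ1] at h'
    simpa [Matrix.trace, Matrix.diag, Matrix.vecMulVec_apply, dotProduct,
      Fin.sum_univ_two, mul_comm] using h'
  have outer_mulVec : ∀ (u v w : Fin 2 → ℂ),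
      (Matrix.vecMulVec u v) *ᵥ w = (v ⬝ᵥ w) • u := by
    intro u v w
    funext i
    simp [Matrix.mulVec, Matrix.vecMulVec_apply, dotProduct, Fin.sum_univ_two]
    ring
  have hv0 : ρ₀ *ᵥ ψ₀ = ψ₀ := by rw [hψ0, outer_mulVec, n0, one_smul]
  have hv1 : ρ₁ *ᵥ ψ₁ = ψ₁ := by rw [hψ1, outer_mulVec, n1, one_smul]
  have orth : star ψ₀ ⬝ᵥ ψ₁ = 0 := by
    calc star ψ₀ ⬝ᵥ ψ₁ = star (ρ₀ *ᵥ ψ₀) ⬝ᵥ (ρ₁ *ᵥ ψ₁) := by rw [hv0, hv1]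
      _ = (star ψ₀ ᵥ* ρ₀ᴴ) ⬝ᵥ (ρ₁ *ᵥ ψ₁) := by rw [Matrix.star_mulVec]
      _ = star ψ₀ ⬝ᵥ ((ρ₀ᴴ * ρ₁) *ᵥ ψ₁) := by
          simp only [Matrix.dotProduct_mulVec, Matrix.vecMul_vecMul]
      _ = 0 := by rw [hρ₀.1, hρ0ρ1, Matrix.zero_mulVec, dotProduct_zero]
  have orth' : star ψ₁ ⬝ᵥ ψ₀ = 0 := by
    calc star ψ₁ ⬝ᵥ ψ₀ = star (ρ₁ *ᵥ ψ₁) ⬝ᵥ (ρ₀ *ᵥ ψ₀) := by rw [hv0, hv1]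
      _ = (star ψ₁ ᵥ* ρ₁ᴴ) ⬝ᵥ (ρ₀ *ᵥ ψ₀) := by rw [Matrix.star_mulVec]
      _ = star ψ₁ ⬝ᵥ ((ρ₁ᴴ * ρ₀) *ᵥ ψ₀) := by
          simp only [Matrix.dotProduct_mulVec, Matrix.vecMul_vecMul]
      _ = 0 := by rw [hρ₁.1, hρ1ρ0, Matrix.zero_mulVec, dotProduct_zero]
  have e0 : (starRingEnd ℂ) (ψ₀ 0) * ψ₀ 0 + (starRingEnd ℂ) (ψ₀ 1) * ψ₀ 1 = 1 := by
    simpa [dotProduct, Fin.sum_univ_two] using n0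
  have e1 : (starRingEnd ℂ) (ψ₁ 0) * ψ₁ 0 + (starRingEnd ℂ) (ψ₁ 1) * ψ₁ 1 = 1 := by
    simpa [dotProduct, Fin.sum_univ_two] using n1
  have eo : (starRingEnd ℂ) (ψ₀ 0) * ψ₁ 0 + (starRingEnd ℂ) (ψ₀ 1) * ψ₁ 1 = 0 := by
    simpa [dotProduct, Fin.sum_univ_two] using orth
  have eo' : (starRingEnd ℂ) (ψ₁ 0) * ψ₀ 0 + (starRingEnd ℂ) (ψ₁ 1) * ψ₀ 1 = 0 := by
    simpa [dotProduct, Fin.sum_univ_two] using orth'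
  set U : Matrix (Fin 2) (Fin 2) ℂ := Matrix.of fun i k => ![ψ₀, ψ₁] k i with hUdef
  have hU : Uᴴ * U = 1 := by
    ext k l
    fin_cases k <;> fin_cases l <;>
      simp only [hUdef, Matrix.mul_apply, Matrix.conjTranspose_apply, Fin.sum_univ_two,
        Matrix.of_apply, Matrix.cons_val_zero, Matrix.cons_val_one, Matrix.head_cons,
        Fin.zero_eta, Fin.mk_one, Fin.isValue, Matrix.one_apply, Complex.star_def,
        if_true, Matrix.one_apply_ne, Ne, one_ne_zero, zero_ne_one,
        not_false_iff, if_false, Matrix.one_apply_eq]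
    · exact e0
    · simpa using eo
    · simpa using eo'
    · exact e1
  have hUU : U * Uᴴ = 1 := mul_eq_one_comm.mp hU
  have key : ∀ i j, ψ₀ i * (starRingEnd ℂ) (ψ₀ j) + ψ₁ i * (starRingEnd ℂ) (ψ₁ j)
      = (1 : Matrix (Fin 2) (Fin 2) ℂ) i j := by
    intro i j
    have h' := hUU
    rw [← Matrix.ext_iff] at h'
    have h2 := h' i j
    simpa [hUdef, Matrix.mul_apply, Matrix.conjTranspose_apply, Fin.sum_univ_two,
      Complex.star_def] using h2
  have hsum1 : ρ₀ + ρ₁ = 1 := by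
    rw [hψ0, hψ1]
    ext i j
    simpa [Matrix.add_apply, Matrix.vecMulVec_apply, Complex.star_def] using key i j
  have hM0 : M₀ = Matrix.vecMulVec ψ₀ (star ψ₀) := by
    rw [← hψ0]
    calc M₀ = M₀ * (ρ₀ + ρ₁) := by rw [hsum1, mul_one]
      _ = M₀ * ρ₀ + M₀ * ρ₁ := by rw [mul_add]
      _ = ρ₀ := by rw [hM0ρ0, hz01, add_zero]
  have hM1 : M₁ = Matrix.vecMulVec ψ₁ (star ψ₁) := by
    rw [← hψ1]
    calc M₁ = M₁ * (ρ₀ + ρ₁) := by rw [hsum1, mul_one]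
      _ = M₁ * ρ₀ + M₁ * ρ₁ := by rw [mul_add]
      _ = ρ₁ := by rw [hM1ρ1, hz10, zero_add]
  exact ⟨ψ₀, ψ₁, n0, n1, orth, hψ0, hM0, hψ1, hM1⟩
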